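/- arXiv:2005.06347 — 2 statements merged into one kernel-verified Lean document; each statement's English description precedes it below -/
import Mathlib

section
/- Let d ≥ 1, α ∈ (1,2), and let ν be a symmetric α-stable Lévy measure on ℝ^d whose associated α-stable probability measure μ has characteristic function μ̂(ξ) = exp(−‖ξ‖^α/2) (the rotationally invariant normalization). Then for every ξ ∈ ℝ^d with ξ ≠ 0, the ℂ^d-valued Bochner integral τ_α(ξ) = ∫_{ℝ^d} u (e^{i⟨u,ξ⟩} − 1) ν(du) equals (iα/2) ‖ξ‖^{α−2} ξ. -/
noncomputable section

open MeasureTheory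
open scoped InnerProductSpace
open scoped ENNReal BoundedContinuousFunction

abbrev Ed (d : ℕ) := EuclideanSpace ℝ (Fin d)

/-- A symmetric `α`-stable Lévy measure on `ℝ^d`. -/
def IsStableLevy (d : ℕ) (α : ℝ) (ν : Measure (Ed d)) : Prop :=
  ν {0} = 0 ∧
  (∫⁻ u, ENNReal.ofReal (min 1 (‖u‖ ^ 2)) ∂ν) < ⊤ ∧
  Measure.map (fun u => -u) ν = ν ∧
  ∀ c : ℝ, 0 < c → Measure.map (fun u : Ed d => c • u) ν = ENNReal.ofReal (c ^ α) • ν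

/-- The characteristic function of a measure on `ℝ^d`. -/
def charFn (d : ℕ) (μ : Measure (Ed d)) (ξ : Ed d) : ℂ :=
  ∫ y, Complex.exp ((⟪y, ξ⟫_ℝ : ℂ) * Complex.I) ∂μ

/-- `μ` is the `α`-stable probability measure associated with the Lévy measure `ν`. -/
def IsStableOf (d : ℕ) (ν μ : Measure (Ed d)) : Prop :=
  IsProbabilityMeasure μ ∧
  ∀ ξ : Ed d, charFn d μ ξ =
    Complex.exp (∫ u, (Complex.exp ((⟪u, ξ⟫_ℝ : ℂ) * Complex.I) - 1 -
      (⟪u, ξ⟫_ℝ : ℂ) * Complex.I) ∂ν)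

/-- `l1` is a spectral measure of `μ`, witnessing non-degeneracy. -/
def IsSpectral (d : ℕ) (α : ℝ) (l1 μ : Measure (Ed d)) : Prop :=
  IsFiniteMeasure l1 ∧
  l1 {x | ‖x‖ ≠ 1} = 0 ∧
  Measure.map (fun x : Ed d => -x) l1 = l1 ∧
  (∃ ε : ℝ, 0 < ε ∧ ∀ z : Ed d, ‖z‖ = 1 → ε ≤ ∫ x, |⟪z, x⟫_ℝ| ^ α ∂l1) ∧
  ∀ ξ : Ed d, charFn d μ ξ = Complex.exp (-((∫ y, |⟪ξ, y⟫_ℝ| ^ α ∂l1 : ℝ) : ℂ))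

/-- The stable heat semigroup. -/
def heatSG (d : ℕ) (α : ℝ) (μ : Measure (Ed d)) (t : ℝ) (f : Ed d → ℝ) (x : Ed d) : ℝ :=
  ∫ y, f (x + t ^ (1/α) • y) ∂μ

/-- The stable Ornstein–Uhlenbeck semigroup. -/
def ouSG (d : ℕ) (α : ℝ) (μ : Measure (Ed d)) (t : ℝ) (f : Ed d → ℝ) (x : Ed d) : ℝ :=
  ∫ y, f (Real.exp (-t) • x + (1 - Real.exp (-(α * t))) ^ (1/α) • y) ∂μ

/-- Complexification of a vector of `ℝ^d`. -/
def toC (d : ℕ) (u : Ed d) : EuclideanSpace ℂ (Fin d) := WithLp.toLp 2 (fun j => (u j : ℂ))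

/-- Gamma transform of order `r` of the stable heat semigroup. -/
def gammaHeat (d : ℕ) (α r : ℝ) (μ : Measure (Ed d)) (f : Ed d → ℝ) (x : Ed d) : ℝ :=
  (1 / Real.Gamma (r / 2)) *
    ∫ t in Set.Ioi (0:ℝ), Real.exp (-t) * t ^ (r/2 - 1) * heatSG d α μ t f x

/-- Gamma transform of order `r` of the stable Ornstein–Uhlenbeck semigroup. -/
def gammaOU (d : ℕ) (α r : ℝ) (μ : Measure (Ed d)) (f : Ed d → ℝ) (x : Ed d) : ℝ :=
  (1 / Real.Gamma (r / 2)) *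
    ∫ t in Set.Ioi (0:ℝ), Real.exp (-t) * t ^ (r/2 - 1) * ouSG d α μ t f x

/-- Fourier transform with the convention `𝓕f(ξ) = ∫ f(x) e^{−i⟨x,ξ⟩} dx`. -/
def FT (d : ℕ) (g : Ed d → ℂ) (ξ : Ed d) : ℂ :=
  ∫ x, g x * Complex.exp (-((⟪x, ξ⟫_ℝ : ℂ) * Complex.I))

/-- Inverse Fourier transform `(2π)^{-d} ∫ g(ξ) e^{i⟨ξ,x⟩} dξ`. -/
def IFT (d : ℕ) (g : Ed d → ℂ) (x : Ed d) : ℂ :=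
  (((2 * Real.pi) ^ d : ℝ) : ℂ)⁻¹ * ∫ ξ, g ξ * Complex.exp ((⟪ξ, x⟫_ℝ : ℂ) * Complex.I)

open Classical in
/-- The multiplier of `D_j^{α-1,rot} ∘ (E - A_α^{rot})^{-r/2}`. -/
def mj (d : ℕ) (α r : ℝ) (j : Fin d) (ξ : Ed d) : ℂ :=
  if ξ = 0 then 0 else
    (Complex.I * (α : ℂ) / 2) * ((ξ j / ‖ξ‖ : ℝ) : ℂ) *
      ((2 ^ (r/2) * ‖ξ‖ ^ (α - 1) / (2 + ‖ξ‖ ^ α) ^ (r/2) : ℝ) : ℂ)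

/-- The symbol `ρ_{α,r}`. -/
def rho (α r : ℝ) (ξ : ℝ) : ℂ :=
  2 * Complex.I * (α : ℂ) *
    ((∫ t in Set.Ioi (0:ℝ), Real.exp (-(t ^ α)) * t ^ (α * r / 2 - α) * Real.sin (ξ * t) : ℝ) : ℂ)

/-- The constant `C_{α,p,r}`. -/
def Cconst (C α p r : ℝ) : ℝ :=
  C / (2 * Real.Gamma (r / 2)) * max p (p - 1)⁻¹ *
    max ((1 - α * (1 - r / 2)) * Real.Gamma (1/α - 1 + r/2) + α * Real.Gamma (r/2 + 1/α))
      (⨆ ξ : ℝ, ‖rho α r ξ‖)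

/-- The one-dimensional stable Lévy constant. -/
def cA (α : ℝ) : ℝ := -α * (α - 1) / (4 * Real.Gamma (2 - α) * Real.cos (α * Real.pi / 2))

/-- The one-dimensional symmetric `α`-stable Lévy measure `c_α |u|^{-α-1} du`. -/
def nu1 (α : ℝ) : Measure ℝ :=
  MeasureTheory.volume.withDensity fun u => ENNReal.ofReal (cA α * |u| ^ (-α - 1))

/-- The `α`-stable Lévy measure on `ℝ^d` concentrated on the coordinate axes. -/
def nuD (d : ℕ) (α : ℝ) : Measure (Ed d) :=
  ∑ k : Fin d, Measure.map (fun u : ℝ => u • EuclideanSpace.single k (1:ℝ)) (nu1 α)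

/-- The symbol `τ_α` of the fractional gradient. -/
def tauA (d : ℕ) (ν : Measure (Ed d)) (ξ : Ed d) : EuclideanSpace ℂ (Fin d) :=
  ∫ u, (Complex.exp ((⟪u, ξ⟫_ℝ : ℂ) * Complex.I) - 1) • toC d u ∂ν

/-- The symbol `ψ_α` of the negative of the stable generator. -/
def psiA (d : ℕ) (α : ℝ) (l1 : Measure (Ed d)) (ξ : Ed d) : ℝ :=
  ∫ y, |⟪ξ, y⟫_ℝ| ^ α ∂l1

open Classical in
/-- The homogeneous fractional Riesz transform `D^{α-1} ∘ (−A_α)^{-(α-1)/α}`. -/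
def rieszT (d : ℕ) (α : ℝ) (ν l1 : Measure (Ed d)) (f : Ed d → ℂ) (x : Ed d) :
    EuclideanSpace ℂ (Fin d) :=
  (((2 * Real.pi) ^ d : ℝ)⁻¹) •
    ∫ ξ, (FT d f ξ * Complex.exp ((⟪ξ, x⟫_ℝ : ℂ) * Complex.I)) •
      (if ξ = 0 then 0 else ((psiA d α l1 ξ ^ ((α - 1)/α))⁻¹ : ℝ) • tauA d ν ξ)

namespace Stmt2Aux

open Complex Metric

lemma absxI (x : ℝ) : ‖(x:ℂ) * I‖ = |x| := by
  rw [norm_mul, Complex.norm_I, Complex.norm_real, Real.norm_eq_abs, mul_one]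

lemma estA2 (x : ℝ) : ‖cexp ((x:ℂ) * I) - 1‖ ≤ 2 := by
  calc ‖cexp ((x:ℂ)*I) - 1‖ ≤ ‖cexp ((x:ℂ)*I)‖ + ‖(1:ℂ)‖ :=
        norm_sub_le _ _
    _ = 2 := by rw [Complex.norm_exp_ofReal_mul_I]; norm_num

lemma estA (x : ℝ) : ‖cexp ((x:ℂ) * I) - 1‖ ≤ 2 * |x| := by
  rcases le_or_gt |x| 1 with h | h
  · have := Complex.norm_exp_sub_one_le (x := (x:ℂ)*I) (by rwa [absxI])
    rwa [absxI] at this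
  · exact (estA2 x).trans (by nlinarith)

lemma estB (x : ℝ) : ‖cexp ((x:ℂ) * I) - 1 - (x:ℂ)*I‖ ≤ 3 * min (x^2) |x| := by
  have habs : ‖cexp ((x:ℂ) * I) - 1 - (x:ℂ)*I‖
      ≤ ‖cexp ((x:ℂ)*I) - 1‖ + |x| := by
    calc ‖cexp ((x:ℂ) * I) - 1 - (x:ℂ)*I‖
        ≤ ‖cexp ((x:ℂ)*I) - 1‖ + ‖(x:ℂ)*I‖ :=
          norm_sub_le _ _
      _ = _ := by rw [absxI]
  have hx : ‖cexp ((x:ℂ) * I) - 1 - (x:ℂ)*I‖ ≤ 3 * |x| :=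
    habs.trans (by have := estA x; linarith)
  have hsq : ‖cexp ((x:ℂ) * I) - 1 - (x:ℂ)*I‖ ≤ 3 * x^2 := by
    rcases le_or_gt |x| 1 with h | h
    · have h2 := Complex.norm_exp_sub_one_sub_id_le (x := (x:ℂ)*I) (by rwa [absxI])
      rw [absxI] at h2
      calc ‖_‖ ≤ |x|^2 := h2
        _ = x^2 := _root_.sq_abs x
        _ ≤ 3 * x^2 := by nlinarith [sq_nonneg x]
    · have h2 : |x| ≤ x^2 := by nlinarith [abs_nonneg x, _root_.sq_abs x]
      exact hx.trans (by nlinarith)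
  rcases min_cases (x^2) |x| with ⟨he, _⟩ | ⟨he, _⟩ <;> rw [he]
  · exact hsq
  · exact hx

lemma minmul {a b c e : ℝ} (ha : 0 ≤ a) (hb : 0 ≤ b) (hc : 0 ≤ c) (he : 0 ≤ e) :
    min (a*b) (c*e) ≤ max a c * min b e := by
  rcases le_total b e with h | h
  · calc min (a*b) (c*e) ≤ a*b := min_le_left _ _
      _ ≤ max a c * min b e := by
          rw [min_eq_left h]; exact mul_le_mul_of_nonneg_right (le_max_left _ _) hb
  · calc min (a*b) (c*e) ≤ c*e := min_le_right _ _
      _ ≤ max a c * min b e := by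
          rw [min_eq_right h]; exact mul_le_mul_of_nonneg_right (le_max_right _ _) he

variable {d : ℕ} {α : ℝ} {ν : Measure (Ed d)}

lemma MS (c : ℝ) : MeasurableSet {u : Ed d | c < ‖u‖} :=
  measurableSet_lt measurable_const measurable_norm

lemma tail (hν : IsStableLevy d α ν) {c : ℝ} (hc : 0 < c) :
    ν {u : Ed d | c < ‖u‖} = ENNReal.ofReal (c ^ (-α)) * ν {u : Ed d | 1 < ‖u‖} := by
  have hmap := hν.2.2.2 c hc
  have hmeas : Measurable fun u : Ed d => c • u := (continuous_const_smul c).measurable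
  have h1 : Measure.map (fun u : Ed d => c • u) ν {u | c < ‖u‖} = ν {u | 1 < ‖u‖} := by
    rw [Measure.map_apply hmeas (MS c)]
    congr 1
    ext u
    simp only [Set.mem_preimage, Set.mem_setOf_eq, norm_smul, Real.norm_eq_abs,
      abs_of_pos hc]
    constructor
    · intro h; nlinarith
    · intro h; nlinarith
  rw [hmap, Measure.smul_apply, smul_eq_mul] at h1
  rw [← h1, ← mul_assoc, ← ENNReal.ofReal_mul (Real.rpow_nonneg hc.le _),
    ← Real.rpow_add hc, neg_add_cancel, Real.rpow_zero, ENNReal.ofReal_one, one_mul]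

lemma tail_fin (hν : IsStableLevy d α ν) : ν {u : Ed d | 1 < ‖u‖} < ⊤ := by
  refine lt_of_le_of_lt ?_ hν.2.1
  rw [← lintegral_indicator_one (MS (d := d) 1)]
  refine lintegral_mono fun u => ?_
  by_cases h : u ∈ {u : Ed d | 1 < ‖u‖}
  · rw [Set.indicator_of_mem h]
    have hu : (1:ℝ) ≤ ‖u‖^2 := by have := h; simp only [Set.mem_setOf_eq] at this; nlinarith
    rw [min_eq_left hu]
    simp
  · rw [Set.indicator_of_notMem h]; exact zero_le

def Ann (d : ℕ) (n : ℕ) : Set (Ed d) := {u | (2:ℝ)^n < ‖u‖ ∧ ‖u‖ ≤ (2:ℝ)^(n+1)}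

lemma Ann_meas (n : ℕ) : MeasurableSet (Ann d n) :=
  (measurableSet_lt measurable_const measurable_norm).inter
    (measurableSet_le measurable_norm measurable_const)

lemma Ann_union : {u : Ed d | 1 < ‖u‖} = ⋃ n, Ann d n := by
  ext u
  simp only [Set.mem_setOf_eq, Set.mem_iUnion, Ann]
  constructor
  · intro h
    have hex : ∃ n : ℕ, ‖u‖ ≤ (2:ℝ)^(n+1) := by
      obtain ⟨n, hn⟩ := pow_unbounded_of_one_lt (‖u‖) (by norm_num : (1:ℝ) < 2)
      exact ⟨n, by calc ‖u‖ ≤ (2:ℝ)^n := hn.le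
        _ ≤ (2:ℝ)^(n+1) := pow_le_pow_right₀ (by norm_num) (Nat.le_succ n)⟩
    classical
    refine ⟨Nat.find hex, ?_, Nat.find_spec hex⟩
    rcases Nat.eq_zero_or_pos (Nat.find hex) with h0 | h0
    · rw [h0]; simpa using h
    · have := Nat.find_min hex (Nat.sub_lt h0 one_pos)
      push_neg at this
      calc (2:ℝ)^(Nat.find hex) = (2:ℝ)^(Nat.find hex - 1 + 1) := by
            congr 1; omega
        _ < ‖u‖ := this
  · rintro ⟨n, hn, -⟩
    calc (1:ℝ) ≤ (2:ℝ)^n := one_le_pow₀ (by norm_num)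
      _ < ‖u‖ := hn

lemma Ann_disj : Pairwise (Function.onFun Disjoint (Ann d)) := by
  intro m n hmn
  wlog h : m < n generalizing m n
  · exact (this hmn.symm (by omega)).symm
  refine Set.disjoint_left.mpr fun u hm hn => ?_
  have h1 : ‖u‖ ≤ (2:ℝ)^(m+1) := hm.2
  have h2 : (2:ℝ)^n < ‖u‖ := hn.1
  have h3 : (2:ℝ)^(m+1) ≤ (2:ℝ)^n := pow_le_pow_right₀ (by norm_num) (by omega)
  linarith

lemma annuli_fin (hν : IsStableLevy d α ν) (hα1 : 1 < α) :
    ∫⁻ u in {u : Ed d | 1 < ‖u‖}, ENNReal.ofReal ‖u‖ ∂ν < ⊤ := by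
  rw [Ann_union, lintegral_iUnion Ann_meas Ann_disj]
  set M := ν {u : Ed d | 1 < ‖u‖} with hM
  set r : ℝ≥0∞ := ENNReal.ofReal ((2:ℝ) ^ (1 - α)) with hr
  have hterm : ∀ n : ℕ, ∫⁻ u in Ann d n, ENNReal.ofReal ‖u‖ ∂ν
      ≤ 2 * r ^ n * M := by
    intro n
    have step1 : ∫⁻ u in Ann d n, ENNReal.ofReal ‖u‖ ∂ν
        ≤ ENNReal.ofReal ((2:ℝ)^(n+1)) * ν (Ann d n) := by
      calc ∫⁻ u in Ann d n, ENNReal.ofReal ‖u‖ ∂ν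
          ≤ ∫⁻ _ in Ann d n, ENNReal.ofReal ((2:ℝ)^(n+1)) ∂ν :=
            setLIntegral_mono measurable_const fun u hu => ENNReal.ofReal_le_ofReal hu.2
        _ = ENNReal.ofReal ((2:ℝ)^(n+1)) * ν (Ann d n) := setLIntegral_const _ _
    have step2 : ν (Ann d n) ≤ ENNReal.ofReal (((2:ℝ)^n) ^ (-α)) * M := by
      rw [hM, ← tail hν (pow_pos two_pos n)]
      exact measure_mono fun u hu => hu.1
    calc ∫⁻ u in Ann d n, ENNReal.ofReal ‖u‖ ∂ν
        ≤ ENNReal.ofReal ((2:ℝ)^(n+1)) * (ENNReal.ofReal (((2:ℝ)^n) ^ (-α)) * M) :=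
          step1.trans (mul_le_mul_right step2 _)
      _ = 2 * r ^ n * M := by
          rw [← mul_assoc, ← ENNReal.ofReal_mul (by positivity)]
          have hre : (2:ℝ)^(n+1) * ((2:ℝ)^n)^(-α) = 2 * ((2:ℝ)^(1-α))^n := by
            rw [← Real.rpow_natCast (2:ℝ) n, ← Real.rpow_natCast (2:ℝ) (n+1),
              ← Real.rpow_mul (by norm_num), ← Real.rpow_add (by norm_num : (0:ℝ) < 2),
              ← Real.rpow_natCast ((2:ℝ)^(1-α)) n, ← Real.rpow_mul (by norm_num),
              show (((n+1:ℕ)):ℝ) + (n:ℝ) * (-α) = 1 + (1 - α) * (n:ℝ) by push_cast; ring,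
              Real.rpow_add (by norm_num : (0:ℝ) < 2), Real.rpow_one]
          rw [hre, ENNReal.ofReal_mul (by norm_num), hr,
            ← ENNReal.ofReal_pow (by positivity)]
          congr 1
          simp
  have hrlt : r < 1 := by
    rw [hr]
    exact ENNReal.ofReal_lt_one.mpr (Real.rpow_lt_one_of_one_lt_of_neg (by norm_num) (by linarith))
  calc ∑' n, ∫⁻ u in Ann d n, ENNReal.ofReal ‖u‖ ∂ν
      ≤ ∑' n : ℕ, 2 * r ^ n * M := ENNReal.tsum_le_tsum hterm
    _ = 2 * M * ∑' n : ℕ, r ^ n := by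
        rw [← ENNReal.tsum_mul_left]
        congr 1; funext n; ring
    _ = 2 * M * (1 - r)⁻¹ := by rw [ENNReal.tsum_geometric]
    _ < ⊤ := by
        refine ENNReal.mul_lt_top (ENNReal.mul_lt_top (by norm_num) (tail_fin hν)) ?_
        exact ENNReal.inv_lt_top.mpr (tsub_pos_of_lt hrlt)

lemma min_lint (hν : IsStableLevy d α ν) (hα1 : 1 < α) :
    ∫⁻ u, ENNReal.ofReal (min ‖u‖ (‖u‖^2)) ∂ν < ⊤ := by
  have hpt : ∀ u : Ed d, ENNReal.ofReal (min ‖u‖ (‖u‖^2))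
      ≤ ENNReal.ofReal (min 1 (‖u‖^2)) +
        Set.indicator {u : Ed d | 1 < ‖u‖} (fun u => ENNReal.ofReal ‖u‖) u := by
    intro u
    by_cases h : u ∈ {u : Ed d | 1 < ‖u‖}
    · rw [Set.indicator_of_mem h]
      have hu : (1:ℝ) < ‖u‖ := h
      have : min ‖u‖ (‖u‖^2) = ‖u‖ := min_eq_left (by nlinarith)
      rw [this]
      exact le_add_self
    · rw [Set.indicator_of_notMem h]
      have hu : ¬ (1:ℝ) < ‖u‖ := h
      push_neg at hu
      have h1 : min ‖u‖ (‖u‖^2) ≤ ‖u‖^2 := min_le_right _ _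
      have h2 : min 1 (‖u‖^2) = ‖u‖^2 := min_eq_right (by nlinarith [norm_nonneg u])
      rw [h2, add_zero]
      exact ENNReal.ofReal_le_ofReal h1
  calc ∫⁻ u, ENNReal.ofReal (min ‖u‖ (‖u‖^2)) ∂ν
      ≤ ∫⁻ u, (ENNReal.ofReal (min 1 (‖u‖^2)) +
          Set.indicator {u : Ed d | 1 < ‖u‖} (fun u => ENNReal.ofReal ‖u‖) u) ∂ν :=
        lintegral_mono hpt
    _ = (∫⁻ u, ENNReal.ofReal (min 1 (‖u‖^2)) ∂ν) +
        ∫⁻ u, Set.indicator {u : Ed d | 1 < ‖u‖} (fun u => ENNReal.ofReal ‖u‖) u ∂ν :=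
        lintegral_add_left (by
          exact (measurable_const.min (measurable_norm.pow_const 2)).ennreal_ofReal) _
    _ < ⊤ := by
        refine ENNReal.add_lt_top.mpr ⟨hν.2.1, ?_⟩
        rw [lintegral_indicator (MS 1)]
        exact annuli_fin hν hα1

lemma integrable_bound (hν : IsStableLevy d α ν) (hα1 : 1 < α)
    {E : Type*} [NormedAddCommGroup E] {f : Ed d → E} (hm : AEStronglyMeasurable f ν)
    {K : ℝ} (hK : 0 ≤ K) (hb : ∀ u, ‖f u‖ ≤ K * min ‖u‖ (‖u‖^2)) : Integrable f ν := by
  refine ⟨hm, ?_⟩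
  rw [hasFiniteIntegral_iff_norm]
  calc ∫⁻ u, ENNReal.ofReal ‖f u‖ ∂ν
      ≤ ∫⁻ u, ENNReal.ofReal K * ENNReal.ofReal (min ‖u‖ (‖u‖^2)) ∂ν :=
        lintegral_mono fun u => by
          rw [← ENNReal.ofReal_mul hK]
          exact ENNReal.ofReal_le_ofReal (hb u)
    _ = ENNReal.ofReal K * ∫⁻ u, ENNReal.ofReal (min ‖u‖ (‖u‖^2)) ∂ν :=
        lintegral_const_mul _ (by
          exact (measurable_norm.min (measurable_norm.pow_const 2)).ennreal_ofReal)
    _ < ⊤ := ENNReal.mul_lt_top ENNReal.ofReal_lt_top (min_lint hν hα1)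

lemma norm_toC (u : Ed d) : ‖toC d u‖ = ‖u‖ := by
  simp [toC, EuclideanSpace.norm_eq]

def gfun (d : ℕ) (ξ u : Ed d) : ℂ :=
  Complex.exp ((⟪u, ξ⟫_ℝ : ℂ) * I) - 1 - (⟪u, ξ⟫_ℝ : ℂ) * I

lemma cont_inner (ξ : Ed d) : Continuous fun u : Ed d => ⟪u, ξ⟫_ℝ :=
  continuous_id.inner continuous_const

lemma cont_g (ξ : Ed d) : Continuous (gfun d ξ) := by
  have h : Continuous fun u : Ed d => ((⟪u, ξ⟫_ℝ : ℝ) : ℂ) * I :=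
    (Complex.continuous_ofReal.comp (cont_inner ξ)).mul continuous_const
  exact (h.cexp.sub continuous_const).sub h

lemma g_bound (ξ u : Ed d) :
    ‖gfun d ξ u‖ ≤ (3 * max (‖ξ‖^2) ‖ξ‖) * min ‖u‖ (‖u‖^2) := by
  have h1 : ‖gfun d ξ u‖ ≤ 3 * min (⟪u, ξ⟫_ℝ^2) |⟪u, ξ⟫_ℝ| := estB _
  have h2 : |⟪u, ξ⟫_ℝ| ≤ ‖u‖ * ‖ξ‖ := abs_real_inner_le_norm u ξ
  refine h1.trans ?_
  rw [mul_assoc]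
  gcongr 3 * ?_
  calc min (⟪u, ξ⟫_ℝ^2) |⟪u, ξ⟫_ℝ| ≤ min (‖ξ‖^2 * ‖u‖^2) (‖ξ‖ * ‖u‖) := by
        refine min_le_min ?_ (by nlinarith [norm_nonneg u, norm_nonneg ξ])
        nlinarith [_root_.sq_abs (⟪u, ξ⟫_ℝ), abs_nonneg (⟪u, ξ⟫_ℝ), norm_nonneg u, norm_nonneg ξ]
    _ ≤ max (‖ξ‖^2) ‖ξ‖ * min (‖u‖^2) ‖u‖ :=
        minmul (by positivity) (by positivity) (norm_nonneg _) (norm_nonneg _)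
    _ = max (‖ξ‖^2) ‖ξ‖ * min ‖u‖ (‖u‖^2) := by rw [min_comm]

lemma e_bound (ξ u : Ed d) :
    ‖(Complex.exp ((⟪u, ξ⟫_ℝ : ℂ) * I) - 1) • toC d u‖
      ≤ (max 2 (2*‖ξ‖)) * min ‖u‖ (‖u‖^2) := by
  rw [norm_smul, norm_toC]
  have h2 : |⟪u, ξ⟫_ℝ| ≤ ‖u‖ * ‖ξ‖ := abs_real_inner_le_norm u ξ
  have hA := estA (⟪u, ξ⟫_ℝ)
  have hA2 := estA2 (⟪u, ξ⟫_ℝ)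
  calc ‖Complex.exp ((⟪u, ξ⟫_ℝ : ℂ) * I) - 1‖ * ‖u‖
      ≤ min (2 * ‖u‖) ((2*‖ξ‖) * ‖u‖^2) := by
        refine le_min ?_ ?_
        · exact mul_le_mul_of_nonneg_right hA2 (norm_nonneg u)
        · have : ‖Complex.exp ((⟪u, ξ⟫_ℝ : ℂ) * I) - 1‖ ≤ 2 * (‖u‖ * ‖ξ‖) :=
            hA.trans (by nlinarith)
          nlinarith [norm_nonneg u, norm_nonneg (Complex.exp ((⟪u, ξ⟫_ℝ : ℂ) * I) - 1)]
    _ ≤ max 2 (2*‖ξ‖) * min ‖u‖ (‖u‖^2) :=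
        minmul (by norm_num) (norm_nonneg _) (by positivity) (by positivity)

def Fd (d : ℕ) (ξ u : Ed d) : Ed d →L[ℝ] ℂ :=
  ((Complex.exp ((⟪u, ξ⟫_ℝ : ℂ) * I) - 1) * I) • (Complex.ofRealCLM.comp (innerSL ℝ u))

lemma Fd_apply (ξ u v : Ed d) :
    Fd d ξ u v = ((Complex.exp ((⟪u, ξ⟫_ℝ : ℂ) * I) - 1) * I) * ((⟪u, v⟫_ℝ : ℝ) : ℂ) := rfl

lemma Fd_cont (ξ : Ed d) : Continuous (Fd d ξ) := by
  show Continuous fun u : Ed d => ((Complex.exp ((⟪u, ξ⟫_ℝ : ℂ) * I) - 1) * I) •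
    (Complex.ofRealCLM.comp (innerSL ℝ u))
  refine Continuous.fun_smul ?_ ?_
  · exact ((Complex.continuous_ofReal.comp (cont_inner ξ)).mul continuous_const).cexp.sub
      continuous_const |>.mul continuous_const
  · exact ((ContinuousLinearMap.compL ℝ (Ed d) ℝ ℂ Complex.ofRealCLM).continuous).comp
      (map_continuous (innerSL ℝ))

lemma Fd_norm (ξ u : Ed d) : ‖Fd d ξ u‖ ≤ (max 2 (2*‖ξ‖)) * min ‖u‖ (‖u‖^2) := by
  have h1 : ‖Fd d ξ u‖ ≤ ‖(Complex.exp ((⟪u, ξ⟫_ℝ : ℂ) * I) - 1) * I‖ *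
      ‖Complex.ofRealCLM.comp (innerSL ℝ u)‖ :=
    norm_smul_le ((Complex.exp ((⟪u, ξ⟫_ℝ : ℂ) * I) - 1) * I) (Complex.ofRealCLM.comp (innerSL ℝ u))
  have h2 : ‖Complex.ofRealCLM.comp (innerSL ℝ u)‖ ≤ ‖u‖ := by
    refine ContinuousLinearMap.opNorm_le_bound _ (norm_nonneg u) fun v => ?_
    have h0 : (Complex.ofRealCLM.comp (innerSL ℝ u)) v = ((⟪u, v⟫_ℝ : ℝ) : ℂ) := rfl
    rw [h0, Complex.norm_real, Real.norm_eq_abs]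
    exact abs_real_inner_le_norm u v
  have h3 : ‖(Complex.exp ((⟪u, ξ⟫_ℝ : ℂ) * I) - 1) * I‖ =
      ‖Complex.exp ((⟪u, ξ⟫_ℝ : ℂ) * I) - 1‖ := by
    rw [norm_mul, Complex.norm_I, mul_one]
  have h2' : |⟪u, ξ⟫_ℝ| ≤ ‖u‖ * ‖ξ‖ := abs_real_inner_le_norm u ξ
  have hA := estA (⟪u, ξ⟫_ℝ)
  have hA2 := estA2 (⟪u, ξ⟫_ℝ)
  refine h1.trans ?_
  rw [h3]
  calc ‖Complex.exp ((⟪u, ξ⟫_ℝ : ℂ) * I) - 1‖ * ‖Complex.ofRealCLM.comp (innerSL ℝ u)‖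
      ≤ ‖Complex.exp ((⟪u, ξ⟫_ℝ : ℂ) * I) - 1‖ * ‖u‖ :=
        mul_le_mul_of_nonneg_left h2 (norm_nonneg _)
    _ ≤ min (2 * ‖u‖) ((2*‖ξ‖) * ‖u‖^2) := by
        refine le_min (mul_le_mul_of_nonneg_right hA2 (norm_nonneg u)) ?_
        have : ‖Complex.exp ((⟪u, ξ⟫_ℝ : ℂ) * I) - 1‖ ≤ 2 * (‖u‖ * ‖ξ‖) :=
          hA.trans (by nlinarith)
        nlinarith [norm_nonneg u, norm_nonneg (Complex.exp ((⟪u, ξ⟫_ℝ : ℂ) * I) - 1)]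
    _ ≤ max 2 (2*‖ξ‖) * min ‖u‖ (‖u‖^2) :=
        minmul (by norm_num) (norm_nonneg _) (by positivity) (by positivity)

lemma Fd_deriv (ξ u : Ed d) : HasFDerivAt (fun x => gfun d x u) (Fd d ξ u) ξ := by
  set L : Ed d →L[ℝ] ℂ := Complex.ofRealCLM.comp (innerSL ℝ u) with hL
  have hl : HasFDerivAt (fun x : Ed d => ((⟪u, x⟫_ℝ : ℝ) : ℂ)) L ξ := L.hasFDerivAt
  have hmul : HasFDerivAt (fun x : Ed d => ((⟪u, x⟫_ℝ : ℝ) : ℂ) * I) (I • L) ξ :=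
    hl.mul_const I
  have hexp : HasDerivAt Complex.exp (Complex.exp ((⟪u, ξ⟫_ℝ : ℂ) * I)) ((⟪u, ξ⟫_ℝ : ℂ) * I) :=
    Complex.hasDerivAt_exp _
  have hcomp := hexp.comp_hasFDerivAt ξ hmul
  have hfinal := (hcomp.sub_const 1).sub hmul
  have : HasFDerivAt (fun x => gfun d x u)
      ((Complex.exp ((⟪u, ξ⟫_ℝ : ℂ) * I)) • (I • L) - I • L) ξ := by
    exact hfinal
  convert this using 1
  ext v
  simp only [Fd, hL, ContinuousLinearMap.smul_apply, ContinuousLinearMap.sub_apply,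
    smul_eq_mul]
  ring

lemma lip_est (ξ u x y : Ed d) (hx : x ∈ ball ξ 1) (hy : y ∈ ball ξ 1) :
    ‖gfun d x u - gfun d y u‖ ≤ ((8 + 2*‖ξ‖) * min ‖u‖ (‖u‖^2)) * ‖x - y‖ := by
  set a := ⟪u, x⟫_ℝ with ha
  set b := ⟪u, y⟫_ℝ with hb
  set δ := a - b with hδ
  have key : Complex.exp ((a:ℂ) * I) = Complex.exp ((b:ℂ) * I) * Complex.exp ((δ:ℂ) * I) := by
    rw [← Complex.exp_add]
    congr 1
    push_cast [hδ]
    ring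
  have hid : gfun d x u - gfun d y u =
      Complex.exp ((b:ℂ)*I) * (Complex.exp ((δ:ℂ)*I) - 1 - (δ:ℂ)*I) +
        ((δ:ℂ)*I) * (Complex.exp ((b:ℂ)*I) - 1) := by
    simp only [gfun, ← ha, ← hb]
    rw [key]
    push_cast [hδ]
    ring
  have hnorm : ‖gfun d x u - gfun d y u‖ ≤
      3 * min (δ^2) |δ| + |δ| * ‖Complex.exp ((b:ℂ)*I) - 1‖ := by
    rw [hid]
    refine (norm_add_le _ _).trans ?_
    gcongr
    · calc ‖Complex.exp ((b:ℂ)*I) * (Complex.exp ((δ:ℂ)*I) - 1 - (δ:ℂ)*I)‖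
          = ‖Complex.exp ((δ:ℂ)*I) - 1 - (δ:ℂ)*I‖ := by
            rw [norm_mul, Complex.norm_exp_ofReal_mul_I,
              one_mul]
        _ ≤ 3 * min (δ^2) |δ| := estB δ
    · calc ‖((δ:ℂ)*I) * (Complex.exp ((b:ℂ)*I) - 1)‖
          = |δ| * ‖Complex.exp ((b:ℂ)*I) - 1‖ := by
            rw [norm_mul, absxI]
        _ ≤ _ := le_rfl
  have hδle : |δ| ≤ ‖u‖ * ‖x - y‖ := by
    rw [hδ, ha, hb, ← inner_sub_right]
    exact abs_real_inner_le_norm u (x - y)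
  have hxy2 : ‖x - y‖ ≤ 2 := by
    have h1 : dist x ξ < 1 := mem_ball.mp hx
    have h2 : dist y ξ < 1 := mem_ball.mp hy
    calc ‖x - y‖ = dist x y := (dist_eq_norm x y).symm
      _ ≤ dist x ξ + dist ξ y := dist_triangle x ξ y
      _ ≤ 2 := by rw [dist_comm ξ y]; linarith
  have hble : |b| ≤ ‖u‖ * (‖ξ‖ + 1) := by
    have h2 : dist y ξ < 1 := mem_ball.mp hy
    have hy' : ‖y‖ ≤ ‖ξ‖ + 1 := by
      calc ‖y‖ ≤ ‖ξ‖ + ‖y - ξ‖ := by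
            have := norm_add_le ξ (y - ξ); simpa using this
        _ ≤ ‖ξ‖ + 1 := by
            have : ‖y - ξ‖ = dist y ξ := (dist_eq_norm y ξ).symm
            linarith [this ▸ h2.le]
    calc |b| ≤ ‖u‖ * ‖y‖ := abs_real_inner_le_norm u y
      _ ≤ ‖u‖ * (‖ξ‖ + 1) := mul_le_mul_of_nonneg_left hy' (norm_nonneg u)
  have hef : ‖Complex.exp ((b:ℂ)*I) - 1‖ ≤ 2 := estA2 b
  have hef2 : ‖Complex.exp ((b:ℂ)*I) - 1‖ ≤ 2 * |b| := estA b
  rcases le_total ‖u‖ (‖u‖^2) with hm | hm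
  · rw [min_eq_left hm]
    have : 3 * min (δ^2) |δ| + |δ| * ‖Complex.exp ((b:ℂ)*I) - 1‖ ≤ 5 * |δ| := by
      have := min_le_right (δ^2) |δ|
      nlinarith [abs_nonneg δ, norm_nonneg (Complex.exp ((b:ℂ)*I) - 1)]
    refine (hnorm.trans this).trans ?_
    nlinarith [norm_nonneg u, norm_nonneg (x - y), abs_nonneg δ, norm_nonneg ξ]
  · rw [min_eq_right hm]
    have hδ2 : δ^2 ≤ (‖u‖ * ‖x - y‖) * (2 * ‖u‖) := by
      have h1 : |δ| ≤ 2 * ‖u‖ := by nlinarith [norm_nonneg u]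
      nlinarith [abs_nonneg δ, _root_.sq_abs δ, norm_nonneg u, norm_nonneg (x-y)]
    have hbe : ‖Complex.exp ((b:ℂ)*I) - 1‖ ≤ 2 * (‖u‖ * (‖ξ‖ + 1)) :=
      hef2.trans (by linarith)
    have hterm2 : |δ| * ‖Complex.exp ((b:ℂ)*I) - 1‖ ≤
        (‖u‖ * ‖x - y‖) * (2 * (‖u‖ * (‖ξ‖ + 1))) :=
      mul_le_mul hδle hbe (norm_nonneg _) (by positivity)
    refine hnorm.trans ?_
    have hmin := min_le_left (δ^2) |δ|
    nlinarith [norm_nonneg u, norm_nonneg (x - y), norm_nonneg ξ, abs_nonneg δ]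

lemma phi_symm (hν : IsStableLevy d α ν) (ξ : Ed d) :
    (starRingEnd ℂ) (∫ u, gfun d ξ u ∂ν) = ∫ u, gfun d ξ u ∂ν := by
  rw [← integral_conj]
  have hconj : ∀ u : Ed d, (starRingEnd ℂ) (gfun d ξ u) = gfun d ξ (-u) := by
    intro u
    simp only [gfun, map_sub, map_mul, map_one, Complex.conj_I, Complex.conj_ofReal,
      ← Complex.exp_conj, inner_neg_left, Complex.ofReal_neg]
    ring_nf
  simp_rw [hconj]
  conv_rhs => rw [← hν.2.2.1]
  rw [integral_map measurable_neg.aemeasurable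
    (by rw [hν.2.2.1]; exact (cont_g ξ).aestronglyMeasurable)]

lemma phi_val {μ : Measure (Ed d)} (hν : IsStableLevy d α ν) (hμ : IsStableOf d ν μ)
    (hrot : ∀ ξ : Ed d, charFn d μ ξ = Complex.exp (-((‖ξ‖ ^ α / 2 : ℝ) : ℂ)))
    (ξ' : Ed d) : (∫ u, gfun d ξ' u ∂ν) = ((-(‖ξ'‖^α/2) : ℝ) : ℂ) := by
  have h1 : Complex.exp (∫ u, gfun d ξ' u ∂ν) = Complex.exp (-((‖ξ'‖^α/2 : ℝ) : ℂ)) :=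
    calc Complex.exp (∫ u, gfun d ξ' u ∂ν) = charFn d μ ξ' := (hμ.2 ξ').symm
      _ = _ := hrot ξ'
  have h2 := Complex.conj_eq_iff_re.mp (phi_symm hν ξ')
  rw [← h2] at h1
  rw [show -((‖ξ'‖^α/2 : ℝ):ℂ) = ((-(‖ξ'‖^α/2) : ℝ):ℂ) by push_cast; ring] at h1
  rw [← Complex.ofReal_exp, ← Complex.ofReal_exp] at h1
  have h3 := Real.exp_eq_exp.mp (Complex.ofReal_inj.mp h1)
  rw [← h2, h3]

lemma psi_deriv (α : ℝ) (ξ : Ed d) (hξ : ξ ≠ 0) :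
    HasFDerivAt (fun x : Ed d => ((-(‖x‖^α/2) : ℝ) : ℂ))
      (Complex.ofRealCLM.comp (((-(α/2)) * ‖ξ‖^(α-2)) • innerSL ℝ ξ)) ξ := by
  have hns : HasFDerivAt (fun x : Ed d => ⟪x,x⟫_ℝ) ((2:ℝ) • innerSL ℝ ξ) ξ := by
    have := (hasFDerivAt_id ξ).inner ℝ (hasFDerivAt_id ξ)
    refine this.congr_fderiv ?_
    ext v
    simp [fderivInnerCLM, real_inner_comm, two_smul, mul_comm]
  have hpos : (0:ℝ) < ⟪ξ,ξ⟫_ℝ := by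
    rw [real_inner_self_eq_norm_sq]
    exact pow_pos (norm_pos_iff.mpr hξ) 2
  have h1 : HasDerivAt (fun t:ℝ => t^(α/2)) ((α/2) * (⟪ξ,ξ⟫_ℝ)^(α/2-1)) (⟪ξ,ξ⟫_ℝ) :=
    Real.hasDerivAt_rpow_const (Or.inl (ne_of_gt hpos))
  have h2 := HasDerivAt.comp_hasFDerivAt (f := fun x : Ed d => ⟪x,x⟫_ℝ) ξ h1 hns
  have h3 := h2.const_mul (-(1/2) : ℝ)
  have hfun : (fun x : Ed d => (-(1/2):ℝ) *
        ((fun t:ℝ => t^(α/2)) ∘ (fun x : Ed d => ⟪x,x⟫_ℝ)) x)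
      = fun x : Ed d => (-(‖x‖^α/2) : ℝ) := by
    funext x
    simp only [Function.comp]
    rw [real_inner_self_eq_norm_sq, ← Real.rpow_natCast ‖x‖ 2,
      ← Real.rpow_mul (norm_nonneg x), show ((2:ℕ):ℝ)*(α/2) = α by push_cast; ring]
    ring
  rw [hfun] at h3
  have h4 := Complex.ofRealCLM.hasFDerivAt.comp ξ h3
  have h5 : HasFDerivAt (fun x : Ed d => ((-(‖x‖^α/2) : ℝ) : ℂ))
      (Complex.ofRealCLM.comp ((-(1/2):ℝ) •
        (((α/2) * (⟪ξ,ξ⟫_ℝ)^(α/2-1)) • ((2:ℝ) • innerSL ℝ ξ)))) ξ := h4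
  have hip : (⟪ξ,ξ⟫_ℝ)^(α/2-1) = ‖ξ‖^(α-2) := by
    rw [real_inner_self_eq_norm_sq, ← Real.rpow_natCast ‖ξ‖ 2,
      ← Real.rpow_mul (norm_nonneg ξ), show ((2:ℕ):ℝ)*(α/2-1) = α-2 by push_cast; ring]
  convert h5 using 1
  ext v
  simp only [ContinuousLinearMap.coe_comp', Function.comp_apply,
    ContinuousLinearMap.coe_smul', Pi.smul_apply, smul_eq_mul, Complex.ofRealCLM_apply, hip]
  push_cast
  ring

lemma key_eq {μ : Measure (Ed d)} (hν : IsStableLevy d α ν) (hα1 : 1 < α)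
    (hμ : IsStableOf d ν μ)
    (hrot : ∀ ξ : Ed d, charFn d μ ξ = Complex.exp (-((‖ξ‖ ^ α / 2 : ℝ) : ℂ)))
    (ξ : Ed d) (hξ : ξ ≠ 0) (j : Fin d) :
    ∫ u, ((Complex.exp ((⟪u, ξ⟫_ℝ:ℂ)*I) - 1) * I) * ((u j : ℝ):ℂ) ∂ν
      = (((-(α/2)) * ‖ξ‖^(α-2) * ξ j : ℝ) : ℂ) := by
  have hbound_meas : AEStronglyMeasurable (fun u : Ed d => (8 + 2*‖ξ‖) * min ‖u‖ (‖u‖^2)) ν :=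
    (continuous_const.mul (continuous_norm.min (continuous_norm.pow 2))).aestronglyMeasurable
  have hdom := hasFDerivAt_integral_of_dominated_loc_of_lip
    (F := fun x u => gfun d x u) (F' := Fd d ξ) (x₀ := ξ)
    (bound := fun u : Ed d => (8 + 2*‖ξ‖) * min ‖u‖ (‖u‖^2)) (s := ball ξ 1) (ball_mem_nhds ξ one_pos)
    (Filter.Eventually.of_forall fun x => (cont_g x).aestronglyMeasurable)
    (integrable_bound hν hα1 (cont_g ξ).aestronglyMeasurable (by positivity) (g_bound ξ))
    ((Fd_cont ξ).aestronglyMeasurable)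
    (Filter.Eventually.of_forall fun u => LipschitzOnWith.of_dist_le_mul fun x hx y hy => by
      rw [dist_eq_norm, dist_eq_norm, Real.coe_nnabs,
        _root_.abs_of_nonneg (by positivity : (0:ℝ) ≤ (8 + 2*‖ξ‖) * min ‖u‖ (‖u‖^2))]
      exact lip_est ξ u x y hx hy)
    (integrable_bound hν hα1 hbound_meas (K := 8 + 2*‖ξ‖) (by positivity) (fun u => by
      rw [Real.norm_eq_abs, _root_.abs_of_nonneg
        (by positivity : (0:ℝ) ≤ (8 + 2*‖ξ‖) * min ‖u‖ (‖u‖^2))]))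
    (Filter.Eventually.of_forall fun u => Fd_deriv ξ u)
  obtain ⟨hint, hD⟩ := hdom
  have hfun : (fun x : Ed d => ∫ u, gfun d x u ∂ν)
      = fun x : Ed d => ((-(‖x‖^α/2) : ℝ) : ℂ) := funext (phi_val hν hμ hrot)
  rw [hfun] at hD
  have huniq := hD.unique (psi_deriv α ξ hξ)
  have happ := congrArg (fun L : Ed d →L[ℝ] ℂ => L (EuclideanSpace.single j (1:ℝ))) huniq
  rw [ContinuousLinearMap.integral_apply hint] at happ
  have hsingle : ∀ u : Ed d, ⟪u, EuclideanSpace.single j (1:ℝ)⟫_ℝ = u j := fun u => by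
    simp [EuclideanSpace.inner_single_right]
  have hLHS : ∀ u : Ed d, Fd d ξ u (EuclideanSpace.single j (1:ℝ))
      = ((Complex.exp ((⟪u, ξ⟫_ℝ:ℂ)*I) - 1) * I) * ((u j : ℝ):ℂ) := fun u => by
    rw [Fd_apply, hsingle u]
  simp_rw [hLHS] at happ
  rw [happ]
  have hRHS : (Complex.ofRealCLM.comp (((-(α/2)) * ‖ξ‖^(α-2)) • innerSL ℝ ξ))
      (EuclideanSpace.single j (1:ℝ))
      = (((-(α/2)) * ‖ξ‖^(α-2) * ξ j : ℝ) : ℂ) := by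
    simp only [ContinuousLinearMap.coe_comp', Function.comp_apply,
      ContinuousLinearMap.coe_smul', Pi.smul_apply, smul_eq_mul, Complex.ofRealCLM_apply]
    rw [show ((innerSL ℝ) ξ) (EuclideanSpace.single j (1:ℝ)) = ξ j from hsingle ξ]
  rw [hRHS]

end Stmt2Aux

theorem stmt2 (d : ℕ) (hd : 1 ≤ d) (α : ℝ) (hα1 : 1 < α) (hα2 : α < 2)
    (ν μ : Measure (Ed d)) (hν : IsStableLevy d α ν) (hμ : IsStableOf d ν μ)
    (hrot : ∀ ξ : Ed d, charFn d μ ξ = Complex.exp (-((‖ξ‖ ^ α / 2 : ℝ) : ℂ)))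
    (ξ : Ed d) (hξ : ξ ≠ 0) :
    (∫ u, (Complex.exp ((⟪u, ξ⟫_ℝ : ℂ) * Complex.I) - 1) • toC d u ∂ν) =
      ((Complex.I * (α : ℂ) / 2) * ((‖ξ‖ ^ (α - 2) : ℝ) : ℂ)) • toC d ξ := by
  classical
  have htoC : Continuous (toC d) := by
    unfold toC
    exact (PiLp.continuous_toLp 2 _).comp <| continuous_pi fun j =>
      Complex.continuous_ofReal.comp ((EuclideanSpace.proj (𝕜 := ℝ) j).continuous)
  have hmeas : AEStronglyMeasurable
      (fun u : Ed d => (Complex.exp ((⟪u, ξ⟫_ℝ : ℂ) * Complex.I) - 1) • toC d u) ν := by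
    refine Continuous.aestronglyMeasurable ?_
    exact (((Complex.continuous_ofReal.comp (Stmt2Aux.cont_inner ξ)).mul
      continuous_const).cexp.sub continuous_const).smul htoC
  have hint : Integrable
      (fun u : Ed d => (Complex.exp ((⟪u, ξ⟫_ℝ : ℂ) * Complex.I) - 1) • toC d u) ν :=
    Stmt2Aux.integrable_bound hν hα1 hmeas (by positivity) (Stmt2Aux.e_bound ξ)
  ext j
  have hcomp := (EuclideanSpace.proj (𝕜 := ℂ) j).integral_comp_comm hint
  have hLHS : (∫ u, (Complex.exp ((⟪u, ξ⟫_ℝ : ℂ) * Complex.I) - 1) • toC d u ∂ν) j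
      = ∫ u, (Complex.exp ((⟪u, ξ⟫_ℝ : ℂ) * Complex.I) - 1) * ((u j : ℝ) : ℂ) ∂ν := by
    rw [show (∫ u, (Complex.exp ((⟪u, ξ⟫_ℝ : ℂ) * Complex.I) - 1) • toC d u ∂ν) j
        = EuclideanSpace.proj (𝕜 := ℂ) j
            (∫ u, (Complex.exp ((⟪u, ξ⟫_ℝ : ℂ) * Complex.I) - 1) • toC d u ∂ν) from rfl,
      ← hcomp]
    rfl
  rw [hLHS]
  have hswap : ∀ u : Ed d, (Complex.exp ((⟪u, ξ⟫_ℝ : ℂ) * Complex.I) - 1) * ((u j : ℝ) : ℂ)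
      = (-Complex.I) * (((Complex.exp ((⟪u, ξ⟫_ℝ : ℂ) * Complex.I) - 1) * Complex.I)
          * ((u j : ℝ) : ℂ)) := fun u => by
    linear_combination ((Complex.exp ((⟪u, ξ⟫_ℝ : ℂ) * Complex.I) - 1) * ((u j : ℝ) : ℂ)) *
      Complex.I_sq
  simp_rw [hswap]
  rw [integral_const_mul, Stmt2Aux.key_eq hν hα1 hμ hrot ξ hξ j]
  have hRHS : (((Complex.I * (α : ℂ) / 2) * ((‖ξ‖ ^ (α - 2) : ℝ) : ℂ)) • toC d ξ) j
      = ((Complex.I * (α : ℂ) / 2) * ((‖ξ‖ ^ (α - 2) : ℝ) : ℂ)) * ((ξ j : ℝ) : ℂ) := rfl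
  rw [hRHS]
  push_cast
  ring
end
end

section
/- Let d ≥ 1, α ∈ (1,2), let ν be a non-degenerate symmetric α-stable Lévy measure on ℝ^d and μ the associated α-stable probability measure. Assume μ has a Lebesgue density p_α, i.e. μ = p_α · (Lebesgue measure), where p_α : ℝ^d → ℝ is everywhere positive and continuously differentiable with ∫_{ℝ^d} ‖∇p_α(y)‖ dy < ∞. Then for every real-valued Schwartz function f on ℝ^d, every t > 0, every x ∈ ℝ^d and every j ∈ {1,…,d}, ∂_j(P_t^α f)(x) = t^{−1/α} ∫_{ℝ^d} f(x + t^{1/α} y) · (−∂_j p_α(y)/p_α(y)) μ(dy). -/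
noncomputable section

open MeasureTheory
open scoped InnerProductSpace
open scoped ENNReal BoundedContinuousFunction

theorem stmt10 (d : ℕ) (hd : 1 ≤ d) (α : ℝ) (hα1 : 1 < α) (hα2 : α < 2)
    (ν μ : Measure (Ed d)) (hν : IsStableLevy d α ν) (hμ : IsStableOf d ν μ)
    (hnd : ∃ l1, IsSpectral d α l1 μ)
    (pα : Ed d → ℝ) (hpos : ∀ y, 0 < pα y) (hdiff : ContDiff ℝ 1 pα)
    (hgrad : Integrable (fun y => fderiv ℝ pα y) MeasureTheory.volume)
    (hdens : μ = MeasureTheory.volume.withDensity fun y => ENNReal.ofReal (pα y))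
    (f : SchwartzMap (Ed d) ℝ) (t : ℝ) (ht : 0 < t) (x : Ed d) (j : Fin d) :
    fderiv ℝ (fun z => heatSG d α μ t (⇑f) z) x (EuclideanSpace.single j 1) =
      t ^ (-(1/α)) * ∫ y, f (x + t ^ (1/α) • y) *
        (-(fderiv ℝ pα y (EuclideanSpace.single j 1)) / pα y) ∂μ := by
  classical
  have hμprob : IsProbabilityMeasure μ := hμ.1
  set s : ℝ := t ^ (1/α) with hs_def
  have hs : 0 < s := Real.rpow_pos_of_pos ht _
  set v : Ed d := EuclideanSpace.single j 1 with hv_def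
  set g : Ed d → ℝ := fun y => f (x + s • y) with hg_def
  -- bounds on f and its derivative
  obtain ⟨C, hC⟩ := f.decay 0 0
  have hCf : ∀ z, ‖f z‖ ≤ C := fun z => by
    simpa [norm_iteratedFDeriv_zero] using hC.2 z
  obtain ⟨C', hC'⟩ := (SchwartzMap.fderivCLM ℝ (Ed d) ℝ f).decay 0 0
  have hCf' : ∀ z, ‖fderiv ℝ (⇑f) z‖ ≤ C' := fun z => by
    simpa [norm_iteratedFDeriv_zero, SchwartzMap.fderivCLM_apply] using hC'.2 z
  have hfc : Continuous (fderiv ℝ (⇑f)) := (f.smooth 1).continuous_fderiv one_ne_zero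
  have haff : Continuous fun y : Ed d => x + s • y :=
    continuous_const.add (continuous_const_smul s)
  -- derivative of g
  have hgd : ∀ y, HasFDerivAt g (s • fderiv ℝ (⇑f) (x + s • y)) y := by
    intro y
    have hm : HasFDerivAt (fun w : Ed d => x + s • w)
        (s • ContinuousLinearMap.id ℝ (Ed d)) y :=
      (((hasFDerivAt_id y).const_smul s).const_add x)
    have h2 := (f.differentiable (x + s • y)).hasFDerivAt.comp y hm
    refine h2.congr_fderiv ?_
    ext w
    simp [ContinuousLinearMap.smul_apply, (fderiv ℝ (⇑f) (x + s • y)).map_smul]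
  have hgdiff : Differentiable ℝ g := fun y => (hgd y).differentiableAt
  have hgd' : ∀ y, fderiv ℝ g y v = s * fderiv ℝ (⇑f) (x + s • y) v := by
    intro y
    rw [(hgd y).fderiv]
    simp [ContinuousLinearMap.smul_apply, smul_eq_mul]
  -- step A : differentiation under the integral sign
  have key : HasFDerivAt (fun z => ∫ y, f (z + s • y) ∂μ)
      (∫ y, fderiv ℝ (⇑f) (x + s • y) ∂μ) x := by
    have h := hasFDerivAt_integral_of_dominated_of_fderiv_le
      (μ := μ) (F := fun z y => f (z + s • y))
      (F' := fun z y => fderiv ℝ (⇑f) (z + s • y)) (x₀ := x)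
      (bound := fun _ => C') (Metric.ball_mem_nhds x one_pos)
      (Filter.Eventually.of_forall fun z =>
        (f.continuous.comp (continuous_const.add (continuous_const_smul s))).aestronglyMeasurable)
      ⟨(f.continuous.comp haff).aestronglyMeasurable,
        MeasureTheory.HasFiniteIntegral.of_bounded (C := C)
          (Filter.Eventually.of_forall fun y => hCf _)⟩
      ((hfc.comp haff).aestronglyMeasurable)
      (Filter.Eventually.of_forall fun y z _ => hCf' _)
      (integrable_const C')
      (Filter.Eventually.of_forall fun y z _ => by
        have hm : HasFDerivAt (fun w : Ed d => w + s • y)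
            (ContinuousLinearMap.id ℝ (Ed d)) z := (hasFDerivAt_id z).add_const (s • y)
        have h2 := (f.differentiable (z + s • y)).hasFDerivAt.comp z hm
        simpa [Function.comp_def] using h2)
    exact h
  have hF'int : Integrable (fun y => fderiv ℝ (⇑f) (x + s • y)) μ :=
    ⟨(hfc.comp haff).aestronglyMeasurable,
      MeasureTheory.HasFiniteIntegral.of_bounded (C := C')
        (Filter.Eventually.of_forall fun y => hCf' _)⟩
  have hL : fderiv ℝ (fun z => heatSG d α μ t (⇑f) z) x v
      = ∫ y, fderiv ℝ (⇑f) (x + s • y) v ∂μ := by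
    have h2 : (fun z => heatSG d α μ t (⇑f) z) = fun z => ∫ y, f (z + s • y) ∂μ := rfl
    rw [h2, key.fderiv, ContinuousLinearMap.integral_apply hF'int]
  -- conversion between μ and volume
  have hpmeas : Measurable fun y => (pα y).toNNReal :=
    measurable_real_toNNReal.comp hdiff.continuous.measurable
  have hconv : ∀ h : Ed d → ℝ, ∫ y, h y ∂μ = ∫ y, pα y * h y := by
    intro h
    rw [hdens,
      show (fun y => ENNReal.ofReal (pα y)) = fun y => ((pα y).toNNReal : ℝ≥0∞) from rfl,
      integral_withDensity_eq_integral_smul hpmeas]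
    refine integral_congr_ae (Filter.Eventually.of_forall fun y => ?_)
    simp [NNReal.smul_def, Real.coe_toNNReal _ (hpos y).le]
  -- integrability facts over volume
  have hpα_int : Integrable pα volume := by
    refine ⟨hdiff.continuous.aestronglyMeasurable, ?_⟩
    have huniv : μ Set.univ = 1 := hμprob.measure_univ
    rw [hdens, MeasureTheory.withDensity_apply _ MeasurableSet.univ,
      MeasureTheory.Measure.restrict_univ] at huniv
    have : (∫⁻ y, ‖pα y‖ₑ) = 1 := by
      rw [← huniv]
      refine lintegral_congr fun y => ?_
      rw [← Real.enorm_eq_ofReal (hpos y).le]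
    rw [MeasureTheory.HasFiniteIntegral, this]
    exact ENNReal.one_lt_top
  have hgradv : Integrable (fun y => fderiv ℝ pα y v) volume :=
    (ContinuousLinearMap.apply ℝ ℝ v).integrable_comp hgrad
  have hg_meas : AEStronglyMeasurable g volume :=
    (f.continuous.comp haff).aestronglyMeasurable
  have hg_bdd : ∃ B, ∀ y, ‖g y‖ ≤ B := ⟨C, fun y => hCf _⟩
  have hgd_meas : AEStronglyMeasurable (fun y => fderiv ℝ g y v) volume := by
    have : Continuous fun y => s * fderiv ℝ (⇑f) (x + s • y) v := by
      exact (continuous_const.mul (((ContinuousLinearMap.apply ℝ ℝ v).continuous.comp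
        (hfc.comp haff))))
    exact (this.congr fun y => (hgd' y).symm).aestronglyMeasurable
  have hgd_bdd : ∃ B, ∀ y, ‖fderiv ℝ g y v‖ ≤ B := by
    refine ⟨‖s‖ * (C' * ‖v‖), fun y => ?_⟩
    rw [hgd' y, norm_mul]
    have h1 : ‖fderiv ℝ (⇑f) (x + s • y) v‖ ≤ C' * ‖v‖ :=
      ((fderiv ℝ (⇑f) (x + s • y)).le_opNorm v).trans
        (mul_le_mul_of_nonneg_right (hCf' _) (norm_nonneg v))
    exact mul_le_mul_of_nonneg_left h1 (norm_nonneg s)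
  -- integration by parts
  have hibp : (∫ y, g y * fderiv ℝ pα y v) = - ∫ y, fderiv ℝ g y v * pα y := by
    refine integral_mul_fderiv_eq_neg_fderiv_mul_of_integrable ?_ ?_ ?_ (fun y _ => hgdiff y)
      (fun y _ => hdiff.differentiable one_ne_zero y)
    · exact hpα_int.bdd_mul hgd_meas (Filter.Eventually.of_forall hgd_bdd.choose_spec)
    · exact hgradv.bdd_mul hg_meas (Filter.Eventually.of_forall hg_bdd.choose_spec)
    · exact hpα_int.bdd_mul hg_meas (Filter.Eventually.of_forall hg_bdd.choose_spec)
  -- assemble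
  have hR : (∫ y, f (x + s • y) * (-(fderiv ℝ pα y v) / pα y) ∂μ)
      = s * ∫ y, pα y * fderiv ℝ (⇑f) (x + s • y) v := by
    rw [hconv]
    have h1 : (fun y => pα y * (f (x + s • y) * (-(fderiv ℝ pα y v) / pα y)))
        = fun y => -(g y * fderiv ℝ pα y v) := by
      funext y
      have hpy := (hpos y).ne'
      field_simp [hg_def]
      ring
    rw [h1, integral_neg, hibp, neg_neg, ← integral_const_mul]
    refine integral_congr_ae (Filter.Eventually.of_forall fun y => ?_)
    show fderiv ℝ g y v * pα y = s * (pα y * fderiv ℝ (⇑f) (x + s • y) v)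
    rw [hgd' y]; ring
  show fderiv ℝ (fun z => heatSG d α μ t (⇑f) z) x v
      = t ^ (-(1/α)) * ∫ y, f (x + s • y) * (-(fderiv ℝ pα y v) / pα y) ∂μ
  rw [hL, hR, hconv]
  rw [← mul_assoc]
  have : t ^ (-(1/α)) * s = 1 := by
    rw [hs_def, ← Real.rpow_add ht]
    norm_num
  rw [this, one_mul]
end
end
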